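/- (Lemma 5.) Let h ≥ 2 and let D = A^{r_1}B^{s_1}⋯A^{r_{h−1}}B^{s_{h−1}}A^{r_h}B^{s_h} and D' = A^{r_1}B^{s_1}⋯A^{r_{h−1}}A^{r_h}B^{s_{h−1}}B^{s_h}, where r_k, s_k ≥ 1 for 1 ≤ k ≤ h, Σ_k r_k = r, Σ_k s_k = s. Then R_D − R_{D'} = 2 S (1 − b_{2h−2})(1 − b_{2h−1}) · Σ_{j=0}^{2h−3} (−1)^j ( Π_{i=0}^{j−1} b_i + Π_{i=j}^{2h−3} b_i ), where the b_i are built from D. -/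

import Mathlib

open Finset

/-- `p°` for a single arm with win probability `x` (Futurity parameter `J = 2`):
`p° = x (1-x)² / (1 - (1-x)²)`. -/
noncomputable def poArm (x : ℝ) : ℝ := x * (1 - x) ^ 2 / (1 - (1 - x) ^ 2)

/-- `p°_D = (1/(r+s)) Σ_{k=1}^{r+s} (Σ_{j=1}^{r+s} p_j Π_{i=j+1}^{j+2k} q_i) / (1 − (q_A^r q_B^s)²)`. -/
noncomputable def pCircD (p : ℕ → ℝ) (r s : ℕ) (qA qB : ℝ) : ℝ :=
  (1 / ((r + s : ℕ) : ℝ)) *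
    ∑ k ∈ Finset.Icc 1 (r + s),
      (∑ j ∈ Finset.Icc 1 (r + s),
          p j * ∏ i ∈ Finset.Icc (j + 1) (j + 2 * k), (1 - p i)) /
        (1 - (qA ^ r * qB ^ s) ^ 2)

/-- The casino's asymptotic profit per coup `R_D = 2(r p°_A + s p°_B)/(r+s) − 2 p°_D`. -/
noncomputable def RD (p : ℕ → ℝ) (r s : ℕ) (pA pB : ℝ) : ℝ :=
  2 * ((r : ℝ) * poArm pA + (s : ℝ) * poArm pB) / ((r + s : ℕ) : ℝ)
    - 2 * pCircD p r s (1 - pA) (1 - pB)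

/-- `S = (q_A − q_B)²(1 + (−1)^{r+s} q_A^r q_B^s) /
      ((r+s)(1+q_A)²(1+q_B)²(1 − (q_A^r q_B^s)²))`. -/
noncomputable def Sval (qA qB : ℝ) (r s : ℕ) : ℝ :=
  (qA - qB) ^ 2 * (1 + (-1 : ℝ) ^ (r + s) * qA ^ r * qB ^ s) /
    (((r + s : ℕ) : ℝ) * (1 + qA) ^ 2 * (1 + qB) ^ 2 * (1 - (qA ^ r * qB ^ s) ^ 2))

namespace L5

noncomputable def zf (p : ℕ → ℝ) (i : ℕ) : ℝ := -(1 - p i)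
noncomputable def gt (p : ℕ → ℝ) (n j : ℕ) : ℝ :=
  ∑ m ∈ Icc 1 n, ∏ i ∈ Icc j (j + m - 1), zf p i
noncomputable def sig (x : ℝ) (a : ℕ) : ℝ := ∑ m ∈ Icc 1 a, x ^ m
noncomputable def tau (x : ℝ) (a : ℕ) : ℝ := ∑ d ∈ Icc 1 a, sig x d


lemma prod_Icc_shift (f : ℕ → ℝ) (n : ℕ) (hf : ∀ i, f (i + n) = f i) (a b : ℕ) :
    ∏ i ∈ Icc (a + n) (b + n), f i = ∏ i ∈ Icc a b, f i := by
  rw [← Finset.map_add_right_Icc, Finset.prod_map]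
  exact Finset.prod_congr rfl fun i _ => hf i

lemma Icc_split_bot (a b : ℕ) (hab : a ≤ b) (f : ℕ → ℝ) :
    ∏ i ∈ Icc a b, f i = f a * ∏ i ∈ Icc (a + 1) b, f i := by
  rw [← Finset.Ico_add_one_right_eq_Icc, ← Finset.Ico_add_one_right_eq_Icc,
    Finset.prod_eq_prod_Ico_succ_bot (show a < b + 1 by omega)]

lemma sum_Icc_split_bot (a b : ℕ) (hab : a ≤ b) (f : ℕ → ℝ) :
    ∑ i ∈ Icc a b, f i = f a + ∑ i ∈ Icc (a + 1) b, f i := by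
  rw [← Finset.Ico_add_one_right_eq_Icc, ← Finset.Ico_add_one_right_eq_Icc,
    Finset.sum_eq_sum_Ico_succ_bot (show a < b + 1 by omega)]

lemma sum_shift_period (F : ℕ → ℝ) (n : ℕ) (hn : 1 ≤ n) (hF : F (1 + n) = F 1) :
    ∑ j ∈ Icc 1 n, F (j + 1) = ∑ j ∈ Icc 1 n, F j := by
  have h1 : ∑ j ∈ Icc 1 n, F (j + 1) = ∑ j ∈ Icc 2 (n+1), F j := by
    rw [show (2:ℕ) = 1 + 1 from rfl, ← Finset.map_add_right_Icc, Finset.sum_map]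
    rfl
  rw [h1, Finset.sum_Icc_succ_top (by omega), sum_Icc_split_bot 1 n hn]
  rw [show 1 + n = n + 1 by omega] at hF
  rw [hF]; ring

lemma sum_pair (f : ℕ → ℝ) : ∀ n, ∑ m ∈ Icc 2 (2*n+1), f m = ∑ k ∈ Icc 1 n, (f (2*k) + f (2*k+1))
  | 0 => by simp
  | (n+1) => by
    have L : ∑ m ∈ Icc 2 (2*(n+1)+1), f m
        = ∑ m ∈ Icc 2 (2*n+1), f m + f (2*n+2) + f (2*n+3) := by
      rw [show 2*(n+1)+1 = (2*n+2)+1 by ring, Finset.sum_Icc_succ_top (show 2 ≤ 2*n+2+1 by omega),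
        show (2*n+2 : ℕ) = (2*n+1)+1 by ring, Finset.sum_Icc_succ_top (show 2 ≤ 2*n+1+1 by omega)]
    have R : ∑ k ∈ Icc 1 (n+1), (f (2*k) + f (2*k+1))
        = ∑ k ∈ Icc 1 n, (f (2*k) + f (2*k+1)) + (f (2*(n+1)) + f (2*(n+1)+1)) :=
      Finset.sum_Icc_succ_top (by omega) _
    rw [L, R, sum_pair f n, show 2*(n+1) = 2*n+2 by ring, show 2*n+2+1 = 2*n+3 by ring]
    ring

lemma sum_pair' (f : ℕ → ℝ) : ∀ n, ∑ t ∈ Icc 1 (2*n), f t = ∑ k ∈ Icc 1 n, (f (2*k-1) + f (2*k))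
  | 0 => by simp
  | (n+1) => by
    have L : ∑ t ∈ Icc 1 (2*(n+1)), f t
        = ∑ t ∈ Icc 1 (2*n), f t + f (2*n+1) + f (2*n+2) := by
      rw [show 2*(n+1) = (2*n+1)+1 by ring, Finset.sum_Icc_succ_top (show 1 ≤ 2*n+1+1 by omega),
        show (2*n+1 : ℕ) = (2*n)+1 by ring, Finset.sum_Icc_succ_top (show 1 ≤ 2*n+1 by omega)]
    have R : ∑ k ∈ Icc 1 (n+1), (f (2*k-1) + f (2*k))
        = ∑ k ∈ Icc 1 n, (f (2*k-1) + f (2*k)) + (f (2*(n+1)-1) + f (2*(n+1))) :=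
      Finset.sum_Icc_succ_top (by omega) _
    rw [L, R, sum_pair' f n, show 2*(n+1)-1 = 2*n+1 by omega, show 2*(n+1) = 2*n+2 by ring]
    ring

lemma prod_pair' (f : ℕ → ℝ) : ∀ n, ∏ t ∈ Icc 1 (2*n), f t = ∏ k ∈ Icc 1 n, (f (2*k-1) * f (2*k))
  | 0 => by simp
  | (n+1) => by
    have L : ∏ t ∈ Icc 1 (2*(n+1)), f t
        = (∏ t ∈ Icc 1 (2*n), f t) * f (2*n+1) * f (2*n+2) := by
      rw [show 2*(n+1) = (2*n+1)+1 by ring, Finset.prod_Icc_succ_top (show 1 ≤ 2*n+1+1 by omega),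
        show (2*n+1 : ℕ) = (2*n)+1 by ring, Finset.prod_Icc_succ_top (show 1 ≤ 2*n+1 by omega)]
    have R : ∏ k ∈ Icc 1 (n+1), (f (2*k-1) * f (2*k))
        = (∏ k ∈ Icc 1 n, (f (2*k-1) * f (2*k))) * (f (2*(n+1)-1) * f (2*(n+1))) :=
      Finset.prod_Icc_succ_top (by omega) _
    rw [L, R, prod_pair' f n, show 2*(n+1)-1 = 2*n+1 by omega, show 2*(n+1) = 2*n+2 by ring]
    ring

lemma sig_succ (x : ℝ) (k : ℕ) : sig x (k+1) = x + x * sig x k := by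
  unfold sig
  rw [sum_Icc_split_bot 1 (k+1) (by omega), pow_one]
  congr 1
  rw [← Finset.map_add_right_Icc, Finset.sum_map, Finset.mul_sum]
  exact Finset.sum_congr rfl fun i _ => by
    show x ^ (i + 1) = x * x ^ i
    rw [pow_succ]; ring

lemma sig_closed (x : ℝ) : ∀ k, (1 - x) * sig x k = x * (1 - x ^ k)
  | 0 => by simp [sig]
  | (k+1) => by
    rw [sig_succ]
    calc (1-x)*(x + x*sig x k) = (1-x)*x + x*((1-x)*sig x k) := by ring
      _ = (1-x)*x + x*(x*(1-x^k)) := by rw [sig_closed x k]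
      _ = x*(1-x^(k+1)) := by rw [pow_succ]; ring

lemma tau_closed (x : ℝ) (a : ℕ) : (1 - x) * tau x a = a * x - x * sig x a := by
  unfold tau
  rw [Finset.mul_sum]
  have h1 : ∀ d ∈ Icc 1 a, (1-x) * sig x d = x - x^(d+1) := by
    intro d _
    rw [sig_closed]; ring
  rw [Finset.sum_congr rfl h1, Finset.sum_sub_distrib, Finset.sum_const, Nat.card_Icc]
  have h2 : ∑ d ∈ Icc 1 a, x^(d+1) = x * sig x a := by
    unfold sig
    rw [Finset.mul_sum]
    exact Finset.sum_congr rfl fun d _ => by rw [pow_succ]; ring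
  rw [h2, nsmul_eq_mul]
  norm_num


section Word
variable (p : ℕ → ℝ) (n : ℕ) (P : ℝ)

lemma zf_per (hper : ∀ i, p (i + n) = p i) (i : ℕ) : zf p (i + n) = zf p i := by
  unfold zf; rw [hper]

lemma full_prod (hn : 1 ≤ n) (hper : ∀ i, p (i + n) = p i)
    (h1 : ∏ i ∈ Icc 1 n, zf p i = P) :
    ∀ j, 1 ≤ j → ∏ i ∈ Icc j (j + n - 1), zf p i = P := by
  intro j hj
  induction j, hj using Nat.le_induction with
  | base => rw [show 1 + n - 1 = n by omega]; exact h1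
  | succ j hj ih =>
    have e1 : j + 1 + n - 1 = (j + n - 1) + 1 := by omega
    rw [e1, Finset.prod_Icc_succ_top (by omega)]
    rw [show j + n - 1 + 1 = j + n by omega, zf_per p n hper j]
    rw [Icc_split_bot j (j+n-1) (by omega)] at ih
    rw [← ih]; ring

lemma gt_rec (hn : 1 ≤ n) (hper : ∀ i, p (i + n) = p i)
    (h1 : ∏ i ∈ Icc 1 n, zf p i = P) (j : ℕ) (hj : 1 ≤ j) :
    gt p n j = zf p j * ((1 - P) + gt p n (j + 1)) := by
  unfold gt
  have step1 : ∀ m ∈ Icc 1 n, ∏ i ∈ Icc j (j + m - 1), zf p i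
      = zf p j * ∏ i ∈ Icc (j+1) (j + m - 1), zf p i := by
    intro m hm
    rw [Finset.mem_Icc] at hm
    exact Icc_split_bot j (j + m - 1) (by omega) _
  rw [Finset.sum_congr rfl step1, ← Finset.mul_sum]
  congr 1
  rw [sum_Icc_split_bot 1 n hn]
  have e0 : ∏ i ∈ Icc (j+1) (j + 1 - 1), zf p i = 1 := by
    rw [show j + 1 - 1 = j by omega, Finset.Icc_eq_empty (by omega), Finset.prod_empty]
  rw [e0]
  have step2 : ∑ m ∈ Icc 1 (n-1), ∏ i ∈ Icc (j+1) ((j+1) + m - 1), zf p i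
      = ∑ m ∈ Icc (1+1) n, ∏ i ∈ Icc (j+1) (j + m - 1), zf p i := by
    have base : ∑ m ∈ Icc 1 (n-1), (fun m => ∏ i ∈ Icc (j+1) (j + m - 1), zf p i) (m+1)
        = ∑ m ∈ Icc (1+1) ((n-1)+1), ∏ i ∈ Icc (j+1) (j + m - 1), zf p i := by
      rw [← Finset.map_add_right_Icc, Finset.sum_map]
      rfl
    rw [show n - 1 + 1 = n by omega] at base
    rw [← base]
    apply Finset.sum_congr rfl
    intro m _
    show ∏ i ∈ Icc (j+1) ((j+1) + m - 1), zf p i = ∏ i ∈ Icc (j+1) (j + (m+1) - 1), zf p i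
    have e : (j+1) + m - 1 = j + (m+1) - 1 := by omega
    rw [e]
  rw [← step2]
  have e2 : ∏ i ∈ Icc (j+1) ((j+1) + n - 1), zf p i = P :=
    full_prod p n P hn hper h1 (j+1) (by omega)
  have hsplit : ∑ m ∈ Icc 1 n, ∏ i ∈ Icc (j+1) ((j+1) + m - 1), zf p i
      = ∑ m ∈ Icc 1 (n-1), ∏ i ∈ Icc (j+1) ((j+1) + m - 1), zf p i + P := by
    conv_lhs => rw [show n = (n-1)+1 by omega]
    rw [Finset.sum_Icc_succ_top (by omega), show (n-1)+1 = n by omega, e2]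
  rw [hsplit]
  ring

lemma gt_per (hper : ∀ i, p (i + n) = p i) (j : ℕ) : gt p n (j + n) = gt p n j := by
  unfold gt
  apply Finset.sum_congr rfl
  intro m hm
  rw [Finset.mem_Icc] at hm
  have e1 : j + n + m - 1 = (j + m - 1) + n := by omega
  rw [e1]
  exact prod_Icc_shift (zf p) n (zf_per p n hper) j (j + m - 1)

end Word

section Blocks
variable (p : ℕ → ℝ) (n : ℕ) (P : ℝ) (a : ℕ → ℕ) (ζ : ℕ → ℝ) (c : ℕ → ℕ)

lemma c_mono (hcs : ∀ t, c (t+1) = c t + a (t+1)) (t : ℕ) : c t ≤ c (t+1) := by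
  rw [hcs]; omega

lemma sum_blocks (F : ℕ → ℝ) (hc0 : c 0 = 0) (hcs : ∀ t, c (t+1) = c t + a (t+1)) :
    ∀ T, ∑ j ∈ Icc 1 (c T), F j = ∑ t ∈ Icc 1 T, ∑ j ∈ Ioc (c (t-1)) (c t), F j
  | 0 => by simp [hc0]
  | (T+1) => by
    have key : ∑ j ∈ Ioc 0 (c T), F j + ∑ j ∈ Ioc (c T) (c (T+1)), F j
        = ∑ j ∈ Ioc 0 (c (T+1)), F j :=
      Finset.sum_Ioc_consecutive F (Nat.zero_le _) (c_mono a c hcs T)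
    have e1 : ∀ x, Icc 1 x = Ioc 0 x := fun x => Finset.Icc_add_one_left_eq_Ioc 0 x
    rw [e1, ← key, ← e1, sum_blocks F hc0 hcs T, Finset.sum_Icc_succ_top (by omega), show T+1-1 = T by omega]

lemma prod_blocks (F : ℕ → ℝ) (hc0 : c 0 = 0) (hcs : ∀ t, c (t+1) = c t + a (t+1)) :
    ∀ T, ∏ j ∈ Icc 1 (c T), F j = ∏ t ∈ Icc 1 T, ∏ j ∈ Ioc (c (t-1)) (c t), F j
  | 0 => by simp [hc0]
  | (T+1) => by
    have key : (∏ j ∈ Ioc 0 (c T), F j) * ∏ j ∈ Ioc (c T) (c (T+1)), F j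
        = ∏ j ∈ Ioc 0 (c (T+1)), F j :=
      Finset.prod_Ioc_consecutive F (Nat.zero_le _) (c_mono a c hcs T)
    have e1 : ∀ x, Icc 1 x = Ioc 0 x := fun x => Finset.Icc_add_one_left_eq_Ioc 0 x
    rw [e1, ← key, ← e1, prod_blocks F hc0 hcs T, Finset.prod_Icc_succ_top (by omega), show T+1-1 = T by omega]

lemma sum_range_rev (F : ℕ → ℝ) (a : ℕ) :
    ∑ l ∈ range a, F (a - l) = ∑ d ∈ Icc 1 a, F d := by
  have h1 := Finset.sum_range_reflect (fun l => F (l+1)) a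
  have h2 : ∑ j ∈ range a, F (a - j) = ∑ j ∈ range a, (fun l => F (l+1)) (a - 1 - j) := by
    apply Finset.sum_congr rfl
    intro j hj
    rw [Finset.mem_range] at hj
    have : a - 1 - j + 1 = a - j := by omega
    simp only [this]
  rw [h2, h1]
  rw [show Icc 1 a = Ico 1 (a+1) by rw [Finset.Ico_add_one_right_eq_Icc], Finset.sum_Ico_eq_sum_range]
  simp only [add_comm, Nat.add_sub_cancel]

lemma block_g (hn : 1 ≤ n) (hper : ∀ i, p (i + n) = p i) (h1 : ∏ i ∈ Icc 1 n, zf p i = P)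
    (hcs : ∀ t, c (t+1) = c t + a (t+1)) (t : ℕ) (ht1 : 1 ≤ t)
    (hz : ∀ i, c (t-1) < i → i ≤ c t → zf p i = ζ t) :
    ∀ k, k ≤ a t → gt p n (c (t-1) + 1 + (a t - k))
      = (1-P) * sig (ζ t) k + (ζ t)^k * gt p n (c t + 1)
  | 0 => by
    intro _
    have hct : c t = c (t-1) + a t := by
      have := hcs (t-1)
      rw [show t - 1 + 1 = t by omega] at this
      rw [this]
    rw [Nat.sub_zero, show c (t-1) + 1 + a t = c t + 1 by omega]
    simp [sig]
  | (k+1) => by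
    intro hk
    have hct : c t = c (t-1) + a t := by
      have := hcs (t-1)
      rw [show t - 1 + 1 = t by omega] at this
      rw [this]
    set j := c (t-1) + 1 + (a t - (k+1)) with hj
    have hrec := gt_rec p n P hn hper h1 j (by omega)
    have hzj : zf p j = ζ t := hz j (by omega) (by omega)
    have hj1 : j + 1 = c (t-1) + 1 + (a t - k) := by omega
    have ih := block_g hn hper h1 hcs t ht1 hz k (by omega)
    rw [hrec, hzj, hj1, ih, sig_succ]
    ring

lemma GT_rec (hn : 1 ≤ n) (hper : ∀ i, p (i + n) = p i) (h1 : ∏ i ∈ Icc 1 n, zf p i = P)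
    (hcs : ∀ t, c (t+1) = c t + a (t+1)) (t : ℕ) (ht1 : 1 ≤ t)
    (hz : ∀ i, c (t-1) < i → i ≤ c t → zf p i = ζ t) :
    gt p n (c (t-1) + 1) = (1-P) * sig (ζ t) (a t) + (ζ t)^(a t) * gt p n (c t + 1) := by
  have := block_g p n P a ζ c hn hper h1 hcs t ht1 hz (a t) le_rfl
  rwa [Nat.sub_self, add_zero] at this

lemma block_sum (hn : 1 ≤ n) (hper : ∀ i, p (i + n) = p i) (h1 : ∏ i ∈ Icc 1 n, zf p i = P)
    (hcs : ∀ t, c (t+1) = c t + a (t+1)) (t : ℕ) (ht1 : 1 ≤ t)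
    (hz : ∀ i, c (t-1) < i → i ≤ c t → zf p i = ζ t) :
    ∑ j ∈ Ioc (c (t-1)) (c t), gt p n j
      = (1-P) * tau (ζ t) (a t) + sig (ζ t) (a t) * gt p n (c t + 1) := by
  have hct : c t = c (t-1) + a t := by
    have := hcs (t-1)
    rw [show t - 1 + 1 = t by omega] at this
    rw [this]
  have e1 : Ioc (c (t-1)) (c t) = Ico (c (t-1) + 1) (c t + 1) := by
    rw [Finset.Ico_add_one_right_eq_Icc, Finset.Icc_add_one_left_eq_Ioc]
  rw [e1, Finset.sum_Ico_eq_sum_range, show c t + 1 - (c (t-1) + 1) = a t by omega]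
  have e2 : ∀ l ∈ range (a t), gt p n (c (t-1) + 1 + l)
      = (1-P) * sig (ζ t) (a t - l) + (ζ t)^(a t - l) * gt p n (c t + 1) := by
    intro l hl
    rw [Finset.mem_range] at hl
    have := block_g p n P a ζ c hn hper h1 hcs t ht1 hz (a t - l) (by omega)
    rwa [show a t - (a t - l) = l by omega] at this
  rw [Finset.sum_congr rfl e2, Finset.sum_add_distrib, ← Finset.mul_sum,
    sum_range_rev (fun d => sig (ζ t) d) (a t)]
  congr 1
  rw [← Finset.sum_mul, sum_range_rev (fun d => (ζ t)^d) (a t)]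
  rfl

lemma word_sum (hn : 1 ≤ n) (hper : ∀ i, p (i + n) = p i) (h1 : ∏ i ∈ Icc 1 n, zf p i = P)
    (hc0 : c 0 = 0) (hcs : ∀ t, c (t+1) = c t + a (t+1)) (T : ℕ) (hcT : c T = n)
    (hzw : ∀ t, 1 ≤ t → t ≤ T → ∀ i, c (t-1) < i → i ≤ c t → zf p i = ζ t) :
    ∑ j ∈ Icc 1 n, gt p n j
      = ∑ t ∈ Icc 1 T, ((1-P) * tau (ζ t) (a t) + sig (ζ t) (a t) * gt p n (c t + 1)) := by
  rw [show Icc 1 n = Icc 1 (c T) by rw [hcT], sum_blocks a c (gt p n) hc0 hcs T]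
  apply Finset.sum_congr rfl
  intro t ht
  rw [Finset.mem_Icc] at ht
  exact block_sum p n P a ζ c hn hper h1 hcs t ht.1 (hzw t ht.1 ht.2)

lemma word_prod (hc0 : c 0 = 0) (hcs : ∀ t, c (t+1) = c t + a (t+1)) (T : ℕ) (hcT : c T = n)
    (hzw : ∀ t, 1 ≤ t → t ≤ T → ∀ i, c (t-1) < i → i ≤ c t → zf p i = ζ t) :
    ∏ i ∈ Icc 1 n, zf p i = ∏ t ∈ Icc 1 T, (ζ t)^(a t) := by
  rw [show Icc 1 n = Icc 1 (c T) by rw [hcT], prod_blocks a c (zf p) hc0 hcs T]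
  apply Finset.prod_congr rfl
  intro t ht
  rw [Finset.mem_Icc] at ht
  have hct : c t = c (t-1) + a t := by
    have := hcs (t-1)
    rw [show t - 1 + 1 = t by omega] at this
    rw [this]
  have e : ∀ i ∈ Ioc (c (t-1)) (c t), zf p i = ζ t := by
    intro i hi
    rw [Finset.mem_Ioc] at hi
    exact hzw t ht.1 ht.2 i hi.1 hi.2
  rw [Finset.prod_congr rfl e, Finset.prod_const, Nat.card_Ioc, show c t - c (t-1) = a t by omega]

lemma word_zsum (hc0 : c 0 = 0) (hcs : ∀ t, c (t+1) = c t + a (t+1)) (T : ℕ) (hcT : c T = n)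
    (hzw : ∀ t, 1 ≤ t → t ≤ T → ∀ i, c (t-1) < i → i ≤ c t → zf p i = ζ t) :
    ∑ i ∈ Icc 1 n, zf p i = ∑ t ∈ Icc 1 T, (a t : ℝ) * ζ t := by
  rw [show Icc 1 n = Icc 1 (c T) by rw [hcT], sum_blocks a c (zf p) hc0 hcs T]
  apply Finset.sum_congr rfl
  intro t ht
  rw [Finset.mem_Icc] at ht
  have hct : c t = c (t-1) + a t := by
    have := hcs (t-1)
    rw [show t - 1 + 1 = t by omega] at this
    rw [this]
  have e : ∀ i ∈ Ioc (c (t-1)) (c t), zf p i = ζ t := by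
    intro i hi
    rw [Finset.mem_Ioc] at hi
    exact hzw t ht.1 ht.2 i hi.1 hi.2
  rw [Finset.sum_congr rfl e, Finset.sum_const, Nat.card_Ioc, show c t - c (t-1) = a t by omega,
    nsmul_eq_mul]

end Blocks

lemma rec_unfold (G σb bb : ℕ → ℝ) (m : ℕ)
    (hrec : ∀ t, 1 ≤ t → t ≤ m → G t = σb t + bb t * G (t+1)) :
    ∀ u, u ≤ m → G 1 = ∑ t ∈ Icc 1 u, (∏ e ∈ Icc 1 (t-1), bb e) * σb t
      + (∏ e ∈ Icc 1 u, bb e) * G (u+1)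
  | 0 => by intro _; simp
  | (u+1) => fun hu => by
    have ih := rec_unfold G σb bb m hrec u (by omega)
    rw [ih, hrec (u+1) (by omega) hu, Finset.sum_Icc_succ_top (show 1 ≤ u+1 by omega),
      Finset.prod_Icc_succ_top (show 1 ≤ u+1 by omega), show u+1-1 = u by omega]
    ring

lemma pref_diff (G G' σb bb : ℕ → ℝ) (m : ℕ)
    (hrec : ∀ t, 1 ≤ t → t ≤ m → G t = σb t + bb t * G (t+1))
    (hrec' : ∀ t, 1 ≤ t → t ≤ m → G' t = σb t + bb t * G' (t+1)) :
    ∀ d u, 1 ≤ u → u + d = m + 1 →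
      G u - G' u = (∏ e ∈ Icc u m, bb e) * (G (m+1) - G' (m+1))
  | 0 => fun u h1 h2 => by
      have : u = m+1 := by omega
      subst this
      rw [Finset.Icc_eq_empty (show ¬ m+1 ≤ m by omega), Finset.prod_empty]
      ring
  | (d+1) => fun u h1 h2 => by
      have hum : u ≤ m := by omega
      have ih := pref_diff G G' σb bb m hrec hrec' d (u+1) (by omega) (by omega)
      rw [hrec u h1 hum, hrec' u h1 hum, Icc_split_bot u m hum]
      calc σb u + bb u * G (u+1) - (σb u + bb u * G' (u+1))
          = bb u * (G (u+1) - G' (u+1)) := by ring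
        _ = _ := by rw [ih]; ring

lemma S1 (σb bb : ℕ → ℝ) (lA lB : ℝ) :
    ∀ m, (∀ t, 1 ≤ t → t ≤ m → σb t = (if t % 2 = 1 then lA else lB) * (1 - bb t)) →
    ∑ t ∈ Icc 1 m, (∏ e ∈ Icc 1 (t-1), bb e) * σb t
      = (lA+lB)/2 * (1 - ∏ e ∈ Icc 1 m, bb e)
        + (lA-lB)/2 * (1 + 2 * ∑ t ∈ Icc 1 m, (-1:ℝ)^t * ∏ e ∈ Icc 1 t, bb e
            - (-1:ℝ)^m * ∏ e ∈ Icc 1 m, bb e)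
  | 0 => by intro _; simp
  | (m+1) => fun hσ => by
    have ih := S1 σb bb lA lB m (fun t h1 h2 => hσ t h1 (by omega))
    rw [Finset.sum_Icc_succ_top (show 1 ≤ m+1 by omega), ih,
      Finset.sum_Icc_succ_top (show 1 ≤ m+1 by omega),
      Finset.prod_Icc_succ_top (show 1 ≤ m+1 by omega),
      show m+1-1 = m by omega, hσ (m+1) (by omega) (by omega)]
    rcases Nat.even_or_odd (m+1) with he | ho
    · have h2 : (m+1) % 2 ≠ 1 := by
        rw [Nat.even_iff] at he; omega
      have hm : Odd m := by
        rw [Nat.even_iff] at he; rw [Nat.odd_iff]; omega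
      rw [if_neg h2, he.neg_one_pow, hm.neg_one_pow]
      ring
    · have h2 : (m+1) % 2 = 1 := by
        rw [Nat.odd_iff] at ho; omega
      have hm : Even m := by
        rw [Nat.odd_iff] at ho; rw [Nat.even_iff]; omega
      rw [if_pos h2, ho.neg_one_pow, hm.neg_one_pow]
      ring

lemma S2 (σb bb : ℕ → ℝ) (lA lB : ℝ) (m : ℕ)
    (hσ : ∀ t, 1 ≤ t → t ≤ m → σb t = (if t % 2 = 1 then lA else lB) * (1 - bb t)) :
    ∀ d u, 1 ≤ u → u + d = m + 1 →
    ∑ t ∈ Icc u m, σb t * (∏ e ∈ Icc (t+1) m, bb e)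
      = (lA+lB)/2 * (1 - ∏ e ∈ Icc u m, bb e)
        + (lA-lB)/2 * (2 * ∑ t ∈ Icc u m, (-1:ℝ)^t * ∏ e ∈ Icc t m, bb e
            - (-1:ℝ)^u * ∏ e ∈ Icc u m, bb e - (-1:ℝ)^m)
  | 0 => fun u h1 h2 => by
      have : u = m+1 := by omega
      subst this
      rw [Finset.Icc_eq_empty (show ¬ m+1 ≤ m by omega)]
      simp [pow_succ]
  | (d+1) => fun u h1 h2 => by
      have hum : u ≤ m := by omega
      have ih := S2 σb bb lA lB m hσ d (u+1) (by omega) (by omega)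
      rw [sum_Icc_split_bot u m hum (fun t => σb t * (∏ e ∈ Icc (t+1) m, bb e)), ih,
        sum_Icc_split_bot u m hum (fun t => (-1:ℝ)^t * ∏ e ∈ Icc t m, bb e),
        Icc_split_bot u m hum, hσ u h1 hum]
      rcases Nat.even_or_odd u with he | ho
      · have h2 : u % 2 ≠ 1 := by rw [Nat.even_iff] at he; omega
        have hu1 : Odd (u+1) := Even.add_one he
        rw [if_neg h2, he.neg_one_pow, hu1.neg_one_pow]
        ring
      · have h2 : u % 2 = 1 := by rw [Nat.odd_iff] at ho; omega
        have hu1 : Even (u+1) := Odd.add_one ho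
        rw [if_pos h2, ho.neg_one_pow, hu1.neg_one_pow]
        ring


lemma pCirc_reduce (p : ℕ → ℝ) (r s : ℕ) (qA qB P : ℝ)
    (hn : 1 ≤ r + s)
    (hper : ∀ i, p (i + (r+s)) = p i)
    (h1 : ∏ i ∈ Icc 1 (r+s), zf p i = P)
    (hQ2 : (qA^r*qB^s)^2 = P^2)
    (hP1 : (1:ℝ) - P ≠ 0) (hP2 : (1:ℝ) + P ≠ 0) :
    pCircD p r s qA qB
      = ((∑ j ∈ Icc 1 (r+s), gt p (r+s) j) / (1-P) - ∑ j ∈ Icc 1 (r+s), zf p j) / (r+s) := by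
  set n := r + s with hndef
  set Tt : ℕ → ℝ := fun m => ∑ j ∈ Icc 1 n, ∏ i ∈ Icc j (j + m - 1), zf p i with hTt
  -- Step A
  have stepA : ∀ k, 1 ≤ k → (∑ j ∈ Icc 1 n, p j * ∏ i ∈ Icc (j+1) (j+2*k), (1 - p i))
      = Tt (2*k) + Tt (2*k+1) := by
    intro k hk
    have w1 : ∀ j, ∏ i ∈ Icc (j+1) (j+2*k), (1 - p i) = ∏ i ∈ Icc (j+1) (j+2*k), zf p i := by
      intro j
      have : ∀ i ∈ Icc (j+1) (j+2*k), (1 - p i) = (-1) * zf p i := by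
        intro i _; simp [zf]
      rw [Finset.prod_congr rfl this, Finset.prod_mul_distrib, Finset.prod_const,
        Nat.card_Icc, show j + 2*k + 1 - (j+1) = 2*k by omega, pow_mul]
      norm_num
    have expand : ∀ j ∈ Icc 1 n, p j * ∏ i ∈ Icc (j+1) (j+2*k), (1 - p i)
        = (∏ i ∈ Icc (j+1) (j+2*k), zf p i) + ∏ i ∈ Icc j (j + (2*k+1) - 1), zf p i := by
      intro j hj
      rw [w1 j, show j + (2*k+1) - 1 = j + 2*k by omega,
        Icc_split_bot j (j+2*k) (by omega)]
      have : p j = 1 + zf p j := by simp [zf]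
      rw [this]; ring
    rw [Finset.sum_congr rfl expand, Finset.sum_add_distrib]
    congr 1
    · -- shift sum = Tt (2k)
      have hF : (fun j => ∏ i ∈ Icc j (j + 2*k - 1), zf p i) (1 + n)
          = (fun j => ∏ i ∈ Icc j (j + 2*k - 1), zf p i) 1 := by
        show ∏ i ∈ Icc (1+n) (1 + n + 2*k - 1), zf p i = ∏ i ∈ Icc 1 (1 + 2*k - 1), zf p i
        rw [show 1 + n + 2*k - 1 = (1 + 2*k - 1) + n by omega]
        exact prod_Icc_shift (zf p) n (zf_per p n hper) 1 (1 + 2*k - 1)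
      have := sum_shift_period (fun j => ∏ i ∈ Icc j (j + 2*k - 1), zf p i) n hn hF
      have e2 : ∀ j ∈ Icc 1 n, (fun j => ∏ i ∈ Icc j (j + 2*k - 1), zf p i) (j+1)
          = ∏ i ∈ Icc (j+1) (j+2*k), zf p i := by
        intro j _
        show ∏ i ∈ Icc (j+1) (j + 1 + 2*k - 1), zf p i = _
        rw [show j + 1 + 2*k - 1 = j + 2*k by omega]
      rw [← Finset.sum_congr rfl e2, this]
  -- Step C
  have stepC : ∀ m, 1 ≤ m → Tt (m+n) = P * Tt m := by
    intro m hm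
    show (∑ j ∈ Icc 1 n, ∏ i ∈ Icc j (j + (m+n) - 1), zf p i) = P * ∑ j ∈ Icc 1 n, ∏ i ∈ Icc j (j + m - 1), zf p i
    rw [Finset.mul_sum]
    apply Finset.sum_congr rfl
    intro j hj
    rw [Finset.mem_Icc] at hj
    have e1 : Icc j (j + (m+n) - 1) = Ico j (j+m+n) := by
      rw [← Finset.Ico_add_one_right_eq_Icc]; congr 1; omega
    rw [e1, ← Finset.prod_Ico_consecutive (zf p) (show j ≤ j+m by omega) (show j+m ≤ j+m+n by omega)]
    have e2 : Ico j (j+m) = Icc j (j+m-1) := by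
      rw [← Finset.Ico_add_one_right_eq_Icc]; congr 1; omega
    have e3 : Ico (j+m) (j+m+n) = Icc (j+m) ((j+m) + n - 1) := by
      rw [← Finset.Ico_add_one_right_eq_Icc]; congr 1; omega
    rw [e2, e3, full_prod p n P hn hper h1 (j+m) (by omega)]
    ring
  -- Step D
  have stepD : ∑ m ∈ Icc 2 (2*n+1), Tt m = (1+P) * ∑ m ∈ Icc 2 (n+1), Tt m := by
    have e1 : Icc 2 (2*n+1) = Ico 2 (2*n+2) := by exact (Finset.Ico_add_one_right_eq_Icc 2 (2*n+1)).symm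
    have e2 : Icc 2 (n+1) = Ico 2 (n+2) := by exact (Finset.Ico_add_one_right_eq_Icc 2 (n+1)).symm
    rw [e1, e2, ← Finset.sum_Ico_consecutive Tt (show 2 ≤ n+2 by omega) (show n+2 ≤ 2*n+2 by omega)]
    have e3 : ∑ m ∈ Ico (n+2) (2*n+2), Tt m = ∑ m ∈ Ico 2 (n+2), Tt (m+n) := by
      rw [Finset.sum_Ico_eq_sum_range, Finset.sum_Ico_eq_sum_range,
        show 2*n+2-(n+2) = n by omega, show n+2-2 = n by omega]
      apply Finset.sum_congr rfl
      intro l _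
      congr 1
      omega
    have e4 : ∑ m ∈ Ico 2 (n+2), Tt (m+n) = ∑ m ∈ Ico 2 (n+2), P * Tt m := by
      apply Finset.sum_congr rfl
      intro m hm
      rw [Finset.mem_Ico] at hm
      exact stepC m (by omega)
    rw [e3, e4, ← Finset.mul_sum]
    ring
  -- Step E
  have stepE : ∑ m ∈ Icc 2 (n+1), Tt m
      = (∑ j ∈ Icc 1 n, gt p n j) - (1-P) * ∑ j ∈ Icc 1 n, zf p j := by
    have swap : ∑ m ∈ Icc 2 (n+1), Tt m
        = ∑ j ∈ Icc 1 n, ∑ m ∈ Icc 2 (n+1), ∏ i ∈ Icc j (j + m - 1), zf p i := by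
      rw [Finset.sum_comm]
    rw [swap, Finset.mul_sum, ← Finset.sum_sub_distrib]
    apply Finset.sum_congr rfl
    intro j hj
    rw [Finset.mem_Icc] at hj
    have e1 : ∑ m ∈ Icc 1 (n+1), ∏ i ∈ Icc j (j + m - 1), zf p i
        = (∏ i ∈ Icc j (j + 1 - 1), zf p i) + ∑ m ∈ Icc 2 (n+1), ∏ i ∈ Icc j (j + m - 1), zf p i :=
      sum_Icc_split_bot 1 (n+1) (by omega) _
    have e2 : ∑ m ∈ Icc 1 (n+1), ∏ i ∈ Icc j (j + m - 1), zf p i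
        = gt p n j + ∏ i ∈ Icc j (j + (n+1) - 1), zf p i :=
      Finset.sum_Icc_succ_top (by omega) _
    have e3 : ∏ i ∈ Icc j (j + 1 - 1), zf p i = zf p j := by
      rw [show j + 1 - 1 = j by omega, Finset.Icc_self, Finset.prod_singleton]
    have e4 : ∏ i ∈ Icc j (j + (n+1) - 1), zf p i = P * zf p j := by
      rw [show j + (n+1) - 1 = (j + n - 1) + 1 by omega,
        Finset.prod_Icc_succ_top (by omega), full_prod p n P hn hper h1 j (by omega),
        show j + n - 1 + 1 = j + n by omega, zf_per p n hper j]
    have := e1.symm.trans e2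
    rw [e3, e4] at this
    have goal : ∑ m ∈ Icc 2 (n+1), ∏ i ∈ Icc j (j + m - 1), zf p i
        = gt p n j - (1-P) * zf p j := by linarith
    exact goal
  -- assemble
  unfold pCircD
  rw [← hndef]
  have eA : ∀ k ∈ Icc 1 n, (∑ j ∈ Icc 1 n, p j * ∏ i ∈ Icc (j+1) (j+2*k), (1 - p i)) / (1 - (qA^r*qB^s)^2)
      = (Tt (2*k) + Tt (2*k+1)) / (1 - (qA^r*qB^s)^2) := by
    intro k hk
    rw [Finset.mem_Icc] at hk
    rw [stepA k hk.1]
  rw [Finset.sum_congr rfl eA, ← Finset.sum_div, ← sum_pair Tt n, stepD, stepE]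
  have hQ : 1 - (qA^r*qB^s)^2 = (1-P)*(1+P) := by rw [hQ2]; ring
  rw [hQ]
  have hnpos : (0:ℝ) < (n:ℝ) := by exact_mod_cast Nat.lt_of_lt_of_le Nat.zero_lt_one hn
  have hn0 : (n:ℝ) ≠ 0 := ne_of_gt hnpos
  have hcast : ((r:ℝ) + (s:ℝ)) = (n:ℝ) := by rw [hndef]; push_cast; ring
  rw [hcast]
  field_simp





/-- Final assembly: pure algebra. -/
lemma assembly
    (P K lamA lamB c1 c2 c3 c4 B1 Api Abe : ℝ)
    (R1r S1r R2r S2r : ℝ)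
    (τ1 τ2 τ3 τ4 τ1' τ2' σ1 σ2 σ3 σ4 σ1' σ2' : ℝ)
    (Ga Gb Gc Gd Ga' Gb' GT1 GT1' Δ ρ Ssb PS PS' SG SG' Tsum : ℝ)
    (hK : K = 1 - P)
    (hP : P = B1*c1*c2*c3*c4)
    (hKne : K ≠ 0)
    (hσ1 : σ1 = lamA*(1-c1)) (hσ2 : σ2 = lamB*(1-c2))
    (hσ3 : σ3 = lamA*(1-c3)) (hσ4 : σ4 = lamB*(1-c4))
    (hσ1' : σ1' = lamA*(1-c1*c3)) (hσ2' : σ2' = lamB*(1-c2*c4))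
    (hτ1 : τ1 = R1r*lamA - lamA^2*(1-c1)) (hτ2 : τ2 = S1r*lamB - lamB^2*(1-c2))
    (hτ3 : τ3 = R2r*lamA - lamA^2*(1-c3)) (hτ4 : τ4 = S2r*lamB - lamB^2*(1-c4))
    (hτ1' : τ1' = (R1r+R2r)*lamA - lamA^2*(1-c1*c3))
    (hτ2' : τ2' = (S1r+S2r)*lamB - lamB^2*(1-c2*c4))
    (E1 : Ga = K*σ1 + c1*Gb) (E2 : Gb = K*σ2 + c2*Gc)
    (E3 : Gc = K*σ3 + c3*Gd) (E4 : Gd = K*σ4 + c4*GT1)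
    (E1' : Ga' = K*σ1' + c1*c3*Gb') (E2' : Gb' = K*σ2' + c2*c4*GT1')
    (hΔdef : Δ = Ga - Ga')
    (hGT1diff : GT1 - GT1' = B1 * Δ)
    (hchain : GT1 = K*ρ + B1*Ga)
    (hρ : ρ = (lamA+lamB)/2*(1-B1) + (lamA-lamB)/2*(1 + 2*Api - B1))
    (hSsb : Ssb = (lamA+lamB)/2*(1-B1)
        + (lamA-lamB)/2*(2*Abe - (-1:ℝ)^1*B1 - 1))
    (hpref : PS - PS' = Ssb * Δ)
    (hSG : SG = Tsum + K*(τ1+τ2+τ3+τ4) + PS + σ1*Gb + σ2*Gc + σ3*Gd + σ4*GT1)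
    (hSG' : SG' = Tsum + K*(τ1'+τ2') + PS' + σ1'*Gb' + σ2'*GT1') :
    SG' - SG = (lamB-lamA)^2*(1-c2)*(1-c3)*(1 - c4 - c1 - c4*Api + c1*Abe + c1*c4*B1) := by
  subst hK hP hσ1 hσ2 hσ3 hσ4 hσ1' hσ2' hτ1 hτ2 hτ3 hτ4 hτ1' hτ2' hρ hSsb hSG hSG' hΔdef
  -- closed form for GT1
  set K := 1 - B1*c1*c2*c3*c4 with hKdef
  have hγ : GT1 = ((lamA+lamB)/2*(1-B1) + (lamA-lamB)/2*(1 + 2*Api - B1))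
      + B1*(lamA*(1-c1) + c1*(lamB*(1-c2)) + c1*c2*(lamA*(1-c3)) + c1*c2*c3*(lamB*(1-c4))) := by
    apply mul_left_cancel₀ hKne
    linear_combination hchain + B1*E1 + B1*c1*E2 + B1*c1*c2*E3 + B1*c1*c2*c3*E4
  -- closed form for Δ
  have hΔ : Ga - Ga' = lamA*(1-c1) + c1*(lamB*(1-c2)) + c1*c2*(lamA*(1-c3))
      + c1*c2*c3*(lamB*(1-c4)) - lamA*(1-c1*c3) - c1*c3*(lamB*(1-c2*c4)) := by
    apply mul_left_cancel₀ hKne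
    linear_combination E1 + c1*E2 + c1*c2*E3 + c1*c2*c3*E4 - E1' - c1*c3*E2'
      + c1*c2*c3*c4*hGT1diff
  have hGT1' : GT1' = GT1 - B1*(Ga - Ga') := by linear_combination -hGT1diff
  have hGb' : Gb' = K*(lamB*(1-c2*c4)) + c2*c4*GT1' := E2'
  have hPS' : PS' = PS - ((lamA+lamB)/2*(1-B1)
      + (lamA-lamB)/2*(2*Abe - (-1:ℝ)^1*B1 - 1)) * (Ga - Ga') := by linear_combination -hpref
  rw [hPS', hGb', hGT1', hΔ, E2, E3, E4, hγ]
  ring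

lemma sum_pair'_nat (f : ℕ → ℕ) : ∀ n, ∑ t ∈ Icc 1 (2*n), f t = ∑ k ∈ Icc 1 n, (f (2*k-1) + f (2*k))
  | 0 => by simp
  | (n+1) => by
    have L : ∑ t ∈ Icc 1 (2*(n+1)), f t
        = ∑ t ∈ Icc 1 (2*n), f t + f (2*n+1) + f (2*n+2) := by
      rw [show 2*(n+1) = (2*n+1)+1 by ring, Finset.sum_Icc_succ_top (show 1 ≤ 2*n+1+1 by omega),
        show (2*n+1 : ℕ) = (2*n)+1 by ring, Finset.sum_Icc_succ_top (show 1 ≤ 2*n+1 by omega)]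
    have R : ∑ k ∈ Icc 1 (n+1), (f (2*k-1) + f (2*k))
        = ∑ k ∈ Icc 1 n, (f (2*k-1) + f (2*k)) + (f (2*(n+1)-1) + f (2*(n+1))) :=
      Finset.sum_Icc_succ_top (by omega) _
    rw [L, R, sum_pair'_nat f n, show 2*(n+1)-1 = 2*n+1 by omega, show 2*(n+1) = 2*n+2 by ring]
    ring

lemma final_glue (x y z Sh d2 e2 e3 P nr : ℝ) (hP1 : 1 - P ≠ 0) (hn0 : nr ≠ 0)
    (hdiff : y - x = d2*e2*e3*Sh) :
    2*((y/(1-P) - z)/nr - (x/(1-P) - z)/nr) = 2*(d2/(nr*(1-P)))*e2*e3*Sh := by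
  field_simp
  linear_combination hdiff

end L5

open L5 in
set_option maxHeartbeats 2000000 in
/-- Lemma 5: difference of the casino's asymptotic profits per coup between
`D = A^{r_1}B^{s_1}⋯A^{r_{h−1}}B^{s_{h−1}}A^{r_h}B^{s_h}` and
`D' = A^{r_1}B^{s_1}⋯A^{r_{h−1}}A^{r_h}B^{s_{h−1}}B^{s_h}`.

The strategies are encoded by their block vectors: for `D`,
`a = (a_1,…,a_{2h}) = (r_1,s_1,…,r_h,s_h)`, and the sequence `p` equals `p_A` on
(odd-indexed) `A`-blocks and `p_B` on (even-indexed) `B`-blocks, extended with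
period `r+s`; likewise for `D'` with block vector
`a' = (r_1,s_1,…,r_{h-2},s_{h-2}, r_{h-1}+r_h, s_{h-1}+s_h)`.
The numbers `b_i` are built from `D`: `b_{2j-1} = (−1)^{a_{2j-1}} q_A^{a_{2j-1}}`,
`b_{2j} = (−1)^{a_{2j}} q_B^{a_{2j}}`, extended with period `2h` (so `b_0 = b_{2h}`). -/
theorem lemma5_RD_difference
    (pA pB qA qB : ℝ) (hpA : pA ∈ Set.Ioo (0 : ℝ) 1) (hpB : pB ∈ Set.Ioo (0 : ℝ) 1)
    (hqA : qA = 1 - pA) (hqB : qB = 1 - pB)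
    (h r s : ℕ) (hh : 2 ≤ h)
    (rk sk : ℕ → ℕ)
    (hrk : ∀ k, 1 ≤ k → k ≤ h → 1 ≤ rk k) (hsk : ∀ k, 1 ≤ k → k ≤ h → 1 ≤ sk k)
    (hrsum : ∑ k ∈ Finset.Icc 1 h, rk k = r) (hssum : ∑ k ∈ Finset.Icc 1 h, sk k = s)
    -- block vector of D
    (a : ℕ → ℕ)
    (ha : ∀ j, 1 ≤ j → j ≤ h → a (2 * j - 1) = rk j ∧ a (2 * j) = sk j)
    -- the strategy D
    (p : ℕ → ℝ)
    (hper : ∀ i, p (i + (r + s)) = p i)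
    (hblocks : ∀ t, 1 ≤ t → t ≤ 2 * h → ∀ i,
        (∑ k ∈ Finset.Icc 1 (t - 1), a k) < i → i ≤ ∑ k ∈ Finset.Icc 1 t, a k →
        p i = if t % 2 = 1 then pA else pB)
    -- block vector of D'
    (a' : ℕ → ℕ)
    (ha'₁ : ∀ k, 1 ≤ k → k ≤ 2 * h - 4 → a' k = a k)
    (ha'₂ : a' (2 * h - 3) = rk (h - 1) + rk h)
    (ha'₃ : a' (2 * h - 2) = sk (h - 1) + sk h)
    -- the strategy D'
    (p' : ℕ → ℝ)
    (hper' : ∀ i, p' (i + (r + s)) = p' i)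
    (hblocks' : ∀ t, 1 ≤ t → t ≤ 2 * h - 2 → ∀ i,
        (∑ k ∈ Finset.Icc 1 (t - 1), a' k) < i → i ≤ ∑ k ∈ Finset.Icc 1 t, a' k →
        p' i = if t % 2 = 1 then pA else pB)
    -- the numbers b_i, built from D
    (b : ℕ → ℝ)
    (hbper : ∀ i, b (i + 2 * h) = b i)
    (hb : ∀ j, 1 ≤ j → j ≤ h →
        b (2 * j - 1) = (-1 : ℝ) ^ a (2 * j - 1) * qA ^ a (2 * j - 1) ∧
        b (2 * j) = (-1 : ℝ) ^ a (2 * j) * qB ^ a (2 * j)) :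
    RD p r s pA pB - RD p' r s pA pB
      = 2 * Sval qA qB r s * (1 - b (2 * h - 2)) * (1 - b (2 * h - 1)) *
          ∑ j ∈ Finset.range (2 * h - 2),
            (-1 : ℝ) ^ j *
              ((∏ i ∈ Finset.range j, b i) + ∏ i ∈ Finset.Icc j (2 * h - 3), b i) := by
  obtain ⟨m0, rfl⟩ : ∃ m0, h = m0 + 2 := ⟨h - 2, by omega⟩
  obtain ⟨hpA0, hpA1⟩ := hpA
  obtain ⟨hpB0, hpB1⟩ := hpB
  have hqA0 : 0 < qA := by rw [hqA]; linarith
  have hqA1 : qA < 1 := by rw [hqA]; linarith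
  have hqB0 : 0 < qB := by rw [hqB]; linarith
  have hqB1 : qB < 1 := by rw [hqB]; linarith
  -- basic sizes
  have hr1 : 1 ≤ r := by
    have h : rk 1 ≤ ∑ k ∈ Icc 1 (m0+2), rk k :=
      Finset.single_le_sum (f := rk) (s := Icc 1 (m0+2)) (fun i _ => Nat.zero_le _)
        (Finset.mem_Icc.mpr ⟨le_rfl, by omega⟩)
    have h2 := hrk 1 (by omega) (by omega)
    omega
  have hs1 : 1 ≤ s := by
    have h : sk 1 ≤ ∑ k ∈ Icc 1 (m0+2), sk k :=
      Finset.single_le_sum (f := sk) (s := Icc 1 (m0+2)) (fun i _ => Nat.zero_le _)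
        (Finset.mem_Icc.mpr ⟨le_rfl, by omega⟩)
    have h2 := hsk 1 (by omega) (by omega)
    omega
  set n := r + s with hndef
  have hn : 1 ≤ n := by omega
  -- P and its properties
  set P : ℝ := (-1:ℝ)^n * (qA^r * qB^s) with hPdef
  have hQpos : 0 < qA^r * qB^s := by positivity
  have hQlt : qA^r * qB^s < 1 := by
    have e1 : qA^r ≤ 1 := pow_le_one₀ (le_of_lt hqA0) (le_of_lt hqA1)
    have e2 : qB^s < 1 := pow_lt_one₀ (le_of_lt hqB0) hqB1 (by omega)
    have e3 : 0 < qB^s := pow_pos hqB0 s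
    have e4 : 0 < qA^r := pow_pos hqA0 r
    nlinarith
  have hsq : ((-1:ℝ)^n)^2 = 1 := by
    rw [← pow_mul, mul_comm n 2, pow_mul]
    norm_num
  have hQ2 : (qA^r*qB^s)^2 = P^2 := by
    rw [hPdef, show (((-1:ℝ)^n)*(qA^r*qB^s))^2 = (((-1:ℝ)^n)^2)*(qA^r*qB^s)^2 from by ring,
      hsq, one_mul]
  have habs : -1 < P ∧ P < 1 := by
    rcases Nat.even_or_odd n with he | ho
    · rw [hPdef, he.neg_one_pow, one_mul]
      constructor <;> nlinarith
    · rw [hPdef, ho.neg_one_pow]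
      constructor <;> nlinarith
  have hP1 : (1:ℝ) - P ≠ 0 := sub_ne_zero.mpr (ne_of_gt habs.2)
  have hP2 : (1:ℝ) + P ≠ 0 := by
    intro hcon
    nlinarith [habs.1]
  -- block data for D
  set ζ : ℕ → ℝ := fun t => if t % 2 = 1 then -qA else -qB with hζdef
  set c : ℕ → ℕ := fun t => ∑ k ∈ Icc 1 t, a k with hcdef
  set c' : ℕ → ℕ := fun t => ∑ k ∈ Icc 1 t, a' k with hc'def
  have hc0 : c 0 = 0 := by simp [hcdef]
  have hc'0 : c' 0 = 0 := by simp [hc'def]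
  have hcs : ∀ t, c (t+1) = c t + a (t+1) := fun t => Finset.sum_Icc_succ_top (by omega) a
  have hc's : ∀ t, c' (t+1) = c' t + a' (t+1) := fun t => Finset.sum_Icc_succ_top (by omega) a'
  have haodd : ∀ j, 1 ≤ j → j ≤ m0+2 → a (2*j-1) = rk j := fun j h1 h2 => (ha j h1 h2).1
  have haeven : ∀ j, 1 ≤ j → j ≤ m0+2 → a (2*j) = sk j := fun j h1 h2 => (ha j h1 h2).2
  have hzw : ∀ t, 1 ≤ t → t ≤ 2*m0+4 → ∀ i, c (t-1) < i → i ≤ c t → zf p i = ζ t := by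
    intro t h1 h2 i hi1 hi2
    have hp := hblocks t h1 (by omega) i hi1 hi2
    rw [hζdef]
    unfold zf
    rw [hp]
    by_cases ht : t % 2 = 1
    · simp only [if_pos ht]; rw [hqA]
    · simp only [if_neg ht]; rw [hqB]
  have hzw' : ∀ t, 1 ≤ t → t ≤ 2*m0+2 → ∀ i, c' (t-1) < i → i ≤ c' t → zf p' i = ζ t := by
    intro t h1 h2 i hi1 hi2
    have hp := hblocks' t h1 (by omega) i hi1 hi2
    rw [hζdef]
    unfold zf
    rw [hp]
    by_cases ht : t % 2 = 1
    · simp only [if_pos ht]; rw [hqA]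
    · simp only [if_neg ht]; rw [hqB]
  have hcT : c (2*m0+4) = n := by
    show (∑ k ∈ Icc 1 (2*m0+4), a k) = n
    rw [show 2*m0+4 = 2*(m0+2) by ring, sum_pair'_nat a (m0+2)]
    have e : ∀ j ∈ Icc 1 (m0+2), a (2*j-1) + a (2*j) = rk j + sk j := by
      intro j hj
      rw [Finset.mem_Icc] at hj
      rw [haodd j hj.1 hj.2, haeven j hj.1 hj.2]
    rw [Finset.sum_congr rfl e, Finset.sum_add_distrib, hrsum, hssum]
  have ha'₂' : a' (2*m0+1) = rk (m0+1) + rk (m0+2) := by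
    have e1 : 2*(m0+2)-3 = 2*m0+1 := by omega
    have e2 : m0+2-1 = m0+1 := by omega
    rw [e1, e2] at ha'₂
    exact ha'₂
  have ha'₃' : a' (2*m0+2) = sk (m0+1) + sk (m0+2) := by
    have e1 : 2*(m0+2)-2 = 2*m0+2 := by omega
    have e2 : m0+2-1 = m0+1 := by omega
    rw [e1, e2] at ha'₃
    exact ha'₃
  have ha'pre : ∀ k, 1 ≤ k → k ≤ 2*m0 → a' k = a k := by
    intro k h1 h2
    exact ha'₁ k h1 (by omega)
  have hcpre : c' (2*m0) = c (2*m0) := by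
    show (∑ k ∈ Icc 1 (2*m0), a' k) = ∑ k ∈ Icc 1 (2*m0), a k
    apply Finset.sum_congr rfl
    intro k hk
    rw [Finset.mem_Icc] at hk
    exact ha'pre k hk.1 hk.2
  have hav1 : a (2*m0+1) = rk (m0+1) := by
    have h := haodd (m0+1) (by omega) (by omega)
    rwa [show 2*(m0+1)-1 = 2*m0+1 by omega] at h
  have hav2 : a (2*m0+2) = sk (m0+1) := by
    have h := haeven (m0+1) (by omega) (by omega)
    rwa [show 2*(m0+1) = 2*m0+2 by omega] at h
  have hav3 : a (2*m0+3) = rk (m0+2) := by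
    have h := haodd (m0+2) (by omega) (by omega)
    rwa [show 2*(m0+2)-1 = 2*m0+3 by omega] at h
  have hav4 : a (2*m0+4) = sk (m0+2) := by
    have h := haeven (m0+2) (by omega) (by omega)
    rwa [show 2*(m0+2) = 2*m0+4 by omega] at h
  have hcs1 : c (2*m0+1) = c (2*m0) + a (2*m0+1) := hcs (2*m0)
  have hcs2 : c (2*m0+2) = c (2*m0+1) + a (2*m0+2) := by
    have h := hcs (2*m0+1); rwa [show 2*m0+1+1 = 2*m0+2 from by omega] at h
  have hcs3 : c (2*m0+3) = c (2*m0+2) + a (2*m0+3) := by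
    have h := hcs (2*m0+2); rwa [show 2*m0+2+1 = 2*m0+3 from by omega] at h
  have hcs4 : c (2*m0+4) = c (2*m0+3) + a (2*m0+4) := by
    have h := hcs (2*m0+3); rwa [show 2*m0+3+1 = 2*m0+4 from by omega] at h
  have hcT' : c' (2*m0+2) = n := by
    have e1 : c' (2*m0+1) = c' (2*m0) + a' (2*m0+1) := hc's (2*m0)
    have e2 : c' (2*m0+2) = c' (2*m0+1) + a' (2*m0+2) := by
      have h := hc's (2*m0+1); rwa [show 2*m0+1+1 = 2*m0+2 from by omega] at h
    rw [hcpre, ha'₂'] at e1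
    rw [ha'₃'] at e2
    rw [hav1] at hcs1
    rw [hav2] at hcs2
    rw [hav3] at hcs3
    rw [hav4] at hcs4
    omega
  have hζo : ∀ t, t % 2 = 1 → ζ t = -qA := by
    intro t ht
    rw [hζdef]
    simp only [if_pos ht]
  have hζe : ∀ t, t % 2 ≠ 1 → ζ t = -qB := by
    intro t ht
    rw [hζdef]
    simp only [if_neg ht]
  have hwpD := word_prod p n a ζ c hc0 hcs (2*m0+4) hcT hzw
  have hpairP : ∏ t ∈ Icc 1 (2*m0+4), (ζ t)^(a t) = (-qA)^r * (-qB)^s := by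
    rw [show 2*m0+4 = 2*(m0+2) from by ring, prod_pair' (fun t => (ζ t)^(a t)) (m0+2)]
    have e : ∀ j ∈ Icc 1 (m0+2), (ζ (2*j-1))^(a (2*j-1)) * (ζ (2*j))^(a (2*j))
        = (-qA)^(rk j) * (-qB)^(sk j) := by
      intro j hj
      rw [Finset.mem_Icc] at hj
      rw [haodd j hj.1 hj.2, haeven j hj.1 hj.2,
        hζo (2*j-1) (by omega), hζe (2*j) (by omega)]
    rw [Finset.prod_congr rfl e, Finset.prod_mul_distrib,
      Finset.prod_pow_eq_pow_sum, Finset.prod_pow_eq_pow_sum, hrsum, hssum]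
  have hPalt : P = (-qA)^r * (-qB)^s := by
    rw [hPdef, neg_pow qA r, neg_pow qB s, hndef, pow_add]
    ring
  have hfull1 : ∏ i ∈ Icc 1 n, zf p i = P := by
    rw [hwpD, hpairP, hPalt]
  -- lam values
  have h1A : (0:ℝ) < 1 + qA := by linarith
  have h1B : (0:ℝ) < 1 + qB := by linarith
  have h1A' : (1:ℝ) + qA ≠ 0 := ne_of_gt h1A
  have h1B' : (1:ℝ) + qB ≠ 0 := ne_of_gt h1B
  set lamA : ℝ := -qA/(1+qA) with hlamA
  set lamB : ℝ := -qB/(1+qB) with hlamB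
  -- tail block values
  set R1 := rk (m0+1) with hR1
  set S1k := sk (m0+1) with hS1k
  set R2 := rk (m0+2) with hR2
  set S2k := sk (m0+2) with hS2k
  set c1 : ℝ := (-qA)^R1 with hc1
  set c2 : ℝ := (-qB)^S1k with hc2
  set c3 : ℝ := (-qA)^R2 with hc3
  set c4 : ℝ := (-qB)^S2k with hc4
  set bb : ℕ → ℝ := fun t => (ζ t)^(a t) with hbbdef
  set B1 : ℝ := ∏ e ∈ Icc 1 (2*m0), bb e with hB1
  set Api : ℝ := ∑ t ∈ Icc 1 (2*m0), (-1:ℝ)^t * ∏ e ∈ Icc 1 t, bb e with hApi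
  set Abe : ℝ := ∑ t ∈ Icc 1 (2*m0), (-1:ℝ)^t * ∏ e ∈ Icc t (2*m0), bb e with hAbe
  -- bb values at tail
  have hbbv1 : bb (2*m0+1) = c1 := by
    rw [hbbdef]
    show (ζ (2*m0+1))^(a (2*m0+1)) = c1
    rw [hζo (2*m0+1) (by omega), hav1, hc1]
  have hbbv2 : bb (2*m0+2) = c2 := by
    rw [hbbdef]
    show (ζ (2*m0+2))^(a (2*m0+2)) = c2
    rw [hζe (2*m0+2) (by omega), hav2, hc2]
  have hbbv3 : bb (2*m0+3) = c3 := by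
    rw [hbbdef]
    show (ζ (2*m0+3))^(a (2*m0+3)) = c3
    rw [hζo (2*m0+3) (by omega), hav3, hc3]
  have hbbv4 : bb (2*m0+4) = c4 := by
    rw [hbbdef]
    show (ζ (2*m0+4))^(a (2*m0+4)) = c4
    rw [hζe (2*m0+4) (by omega), hav4, hc4]
  -- product of all bb equals P
  have hprodD : ∏ t ∈ Icc 1 (2*m0+4), bb t = P := by
    rw [hbbdef]
    exact hwpD.symm.trans hfull1
  have hPB1 : P = B1*c1*c2*c3*c4 := by
    rw [← hprodD, show 2*m0+4 = (2*m0+3)+1 from by omega,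
      Finset.prod_Icc_succ_top (by omega),
      show 2*m0+3 = (2*m0+2)+1 from by omega,
      Finset.prod_Icc_succ_top (by omega),
      show 2*m0+2 = (2*m0+1)+1 from by omega,
      Finset.prod_Icc_succ_top (by omega),
      show 2*m0+1 = (2*m0)+1 from by omega,
      Finset.prod_Icc_succ_top (by omega), ← hB1]
    rw [show (2*m0)+1 = 2*m0+1 from by omega, show 2*m0+1+1 = 2*m0+2 from by omega,
      show 2*m0+2+1 = 2*m0+3 from by omega, show 2*m0+3+1 = 2*m0+4 from by omega,
      hbbv1, hbbv2, hbbv3, hbbv4]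
  have hfull1' : ∏ i ∈ Icc 1 n, zf p' i = P := by
    rw [word_prod p' n a' ζ c' hc'0 hc's (2*m0+2) hcT' hzw',
      show 2*m0+2 = (2*m0+1)+1 from by omega,
      Finset.prod_Icc_succ_top (by omega),
      show 2*m0+1 = (2*m0)+1 from by omega,
      Finset.prod_Icc_succ_top (by omega)]
    rw [show (2*m0)+1 = 2*m0+1 from by omega, show 2*m0+1+1 = 2*m0+2 from by omega]
    have epre : ∏ t ∈ Icc 1 (2*m0), (ζ t)^(a' t) = B1 := by
      rw [hB1]
      apply Finset.prod_congr rfl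
      intro t ht
      rw [Finset.mem_Icc] at ht
      rw [ha'pre t ht.1 ht.2, hbbdef]
    rw [epre, ha'₂', ha'₃', hζo (2*m0+1) (by omega), hζe (2*m0+2) (by omega),
      pow_add, pow_add, ← hc1, ← hc2, ← hc3, ← hc4, hPB1]
    ring
  -- the six sigma values etc
  have hsigA : ∀ k : ℕ, sig (-qA) k = lamA * (1 - (-qA)^k) := by
    intro k
    have hcl := sig_closed (-qA) k
    rw [hlamA]
    field_simp
    linear_combination hcl
  have hsigB : ∀ k : ℕ, sig (-qB) k = lamB * (1 - (-qB)^k) := by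
    intro k
    have hcl := sig_closed (-qB) k
    rw [hlamB]
    field_simp
    linear_combination hcl
  have htauA : ∀ k : ℕ, tau (-qA) k = (k:ℝ)*lamA - lamA^2*(1-(-qA)^k) := by
    intro k
    have hcl := tau_closed (-qA) k
    rw [hsigA k, hlamA] at hcl
    rw [hlamA]
    field_simp at hcl ⊢
    linear_combination hcl
  have htauB : ∀ k : ℕ, tau (-qB) k = (k:ℝ)*lamB - lamB^2*(1-(-qB)^k) := by
    intro k
    have hcl := tau_closed (-qB) k
    rw [hsigB k, hlamB] at hcl
    rw [hlamB]
    field_simp at hcl ⊢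
    linear_combination hcl
  -- main SG difference
  have hSGdiff : (∑ j ∈ Icc 1 n, gt p' n j) - (∑ j ∈ Icc 1 n, gt p n j)
      = (lamB-lamA)^2*(1-c2)*(1-c3)*(1 - c4 - c1 - c4*Api + c1*Abe + c1*c4*B1) := by
    set GD : ℕ → ℝ := fun t => gt p n (c (t-1) + 1) with hGDdef
    set GD' : ℕ → ℝ := fun t => gt p' n (c' (t-1) + 1) with hGD'def
    set σb : ℕ → ℝ := fun t => (1-P) * sig (ζ t) (a t) with hσbdef
    have hGDt : ∀ t, GD (t+1) = gt p n (c t + 1) := by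
      intro t
      rw [hGDdef]
      show gt p n (c (t+1-1) + 1) = _
      rw [show t+1-1 = t from by omega]
    have hGD't : ∀ t, GD' (t+1) = gt p' n (c' t + 1) := by
      intro t
      rw [hGD'def]
      show gt p' n (c' (t+1-1) + 1) = _
      rw [show t+1-1 = t from by omega]
    have hrecD0 : ∀ t, 1 ≤ t → t ≤ 2*m0+4 → GD t = σb t + bb t * GD (t+1) := by
      intro t h1 h2
      have hgr := GT_rec p n P a ζ c hn hper hfull1 hcs t h1 (hzw t h1 h2)
      rw [hGDt t, hGDdef, hσbdef, hbbdef]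
      exact hgr
    have hrecD'0 : ∀ t, 1 ≤ t → t ≤ 2*m0+2 →
        GD' t = (1-P) * sig (ζ t) (a' t) + (ζ t)^(a' t) * GD' (t+1) := by
      intro t h1 h2
      have hgr := GT_rec p' n P a' ζ c' hn hper' hfull1' hc's t h1 (hzw' t h1 h2)
      rw [hGD't t, hGD'def]
      exact hgr
    have hrecD : ∀ t, 1 ≤ t → t ≤ 2*m0 → GD t = σb t + bb t * GD (t+1) :=
      fun t h1 h2 => hrecD0 t h1 (by omega)
    have hrecD' : ∀ t, 1 ≤ t → t ≤ 2*m0 → GD' t = σb t + bb t * GD' (t+1) := by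
      intro t h1 h2
      have h := hrecD'0 t h1 (by omega)
      rw [ha'pre t h1 h2] at h
      rw [hσbdef, hbbdef]
      exact h
    have hpd := pref_diff GD GD' σb bb (2*m0) hrecD hrecD'
    have hσT : ∀ t, 1 ≤ t → t ≤ 2*m0 →
        sig (ζ t) (a t) = (if t % 2 = 1 then lamA else lamB) * (1 - bb t) := by
      intro t h1 h2
      by_cases ht : t % 2 = 1
      · rw [hζo t ht, if_pos ht, hsigA (a t), hbbdef]
        show lamA * (1 - (-qA)^(a t)) = lamA * (1 - (ζ t)^(a t))
        rw [hζo t ht]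
      · rw [hζe t ht, if_neg ht, hsigB (a t), hbbdef]
        show lamB * (1 - (-qB)^(a t)) = lamB * (1 - (ζ t)^(a t))
        rw [hζe t ht]
    -- named tail quantities
    have hGD1 : GD 1 = gt p n 1 := by
      rw [hGDdef]
      show gt p n (c (1-1) + 1) = _
      rw [show (1:ℕ)-1 = 0 from rfl, hc0]
    have hGD'1 : GD' 1 = gt p' n 1 := by
      rw [hGD'def]
      show gt p' n (c' (1-1) + 1) = _
      rw [show (1:ℕ)-1 = 0 from rfl, hc'0]
    have hGDa : GD (2*m0+1) = gt p n (c (2*m0) + 1) := by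
      rw [hGDdef]
      show gt p n (c (2*m0+1-1) + 1) = _
      rw [show 2*m0+1-1 = 2*m0 from by omega]
    have hGD'a : GD' (2*m0+1) = gt p' n (c' (2*m0) + 1) := by
      rw [hGD'def]
      show gt p' n (c' (2*m0+1-1) + 1) = _
      rw [show 2*m0+1-1 = 2*m0 from by omega]
    have hGn : gt p n (c (2*m0+4) + 1) = gt p n 1 := by
      rw [hcT, show n+1 = 1+n from by omega, gt_per p n hper 1]
    have hGn' : gt p' n (c' (2*m0+2) + 1) = gt p' n 1 := by
      rw [hcT', show n+1 = 1+n from by omega, gt_per p' n hper' 1]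
    -- E equations
    have E1 : gt p n (c (2*m0) + 1)
        = (1-P)*sig (-qA) R1 + c1 * gt p n (c (2*m0+1) + 1) := by
      have hgr := GT_rec p n P a ζ c hn hper hfull1 hcs (2*m0+1) (by omega)
        (hzw _ (by omega) (by omega))
      rw [show 2*m0+1-1 = 2*m0 from by omega, hζo (2*m0+1) (by omega), hav1] at hgr
      rw [hc1]
      exact hgr
    have E2 : gt p n (c (2*m0+1) + 1)
        = (1-P)*sig (-qB) S1k + c2 * gt p n (c (2*m0+2) + 1) := by
      have hgr := GT_rec p n P a ζ c hn hper hfull1 hcs (2*m0+2) (by omega)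
        (hzw _ (by omega) (by omega))
      rw [show 2*m0+2-1 = 2*m0+1 from by omega, hζe (2*m0+2) (by omega), hav2] at hgr
      rw [hc2]
      exact hgr
    have E3 : gt p n (c (2*m0+2) + 1)
        = (1-P)*sig (-qA) R2 + c3 * gt p n (c (2*m0+3) + 1) := by
      have hgr := GT_rec p n P a ζ c hn hper hfull1 hcs (2*m0+3) (by omega)
        (hzw _ (by omega) (by omega))
      rw [show 2*m0+3-1 = 2*m0+2 from by omega, hζo (2*m0+3) (by omega), hav3] at hgr
      rw [hc3]
      exact hgr
    have E4 : gt p n (c (2*m0+3) + 1)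
        = (1-P)*sig (-qB) S2k + c4 * gt p n 1 := by
      have hgr := GT_rec p n P a ζ c hn hper hfull1 hcs (2*m0+4) (by omega)
        (hzw _ (by omega) (by omega))
      rw [show 2*m0+4-1 = 2*m0+3 from by omega, hζe (2*m0+4) (by omega), hav4, hGn] at hgr
      rw [hc4]
      exact hgr
    have E1' : gt p' n (c' (2*m0) + 1)
        = (1-P)*sig (-qA) (R1+R2) + (c1*c3) * gt p' n (c' (2*m0+1) + 1) := by
      have hgr := GT_rec p' n P a' ζ c' hn hper' hfull1' hc's (2*m0+1) (by omega)
        (hzw' _ (by omega) (by omega))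
      rw [show 2*m0+1-1 = 2*m0 from by omega, hζo (2*m0+1) (by omega), ha'₂', pow_add] at hgr
      rw [hc1, hc3]
      exact hgr
    have E2' : gt p' n (c' (2*m0+1) + 1)
        = (1-P)*sig (-qB) (S1k+S2k) + (c2*c4) * gt p' n 1 := by
      have hgr := GT_rec p' n P a' ζ c' hn hper' hfull1' hc's (2*m0+2) (by omega)
        (hzw' _ (by omega) (by omega))
      rw [show 2*m0+2-1 = 2*m0+1 from by omega, hζe (2*m0+2) (by omega), ha'₃', pow_add,
        hGn'] at hgr
      rw [hc2, hc4]
      exact hgr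
    -- GT1 difference
    have hGT1d : gt p n 1 - gt p' n 1
        = B1 * (gt p n (c (2*m0) + 1) - gt p' n (c' (2*m0) + 1)) := by
      have h := hpd (2*m0) 1 (by omega) (by omega)
      rw [hGD1, hGD'1, hGDa, hGD'a, ← hB1] at h
      exact h
    -- prefix sums
    set PS := ∑ t ∈ Icc 1 (2*m0), sig (ζ t) (a t) * gt p n (c t + 1) with hPSdef
    set PS' := ∑ t ∈ Icc 1 (2*m0), sig (ζ t) (a t) * gt p' n (c' t + 1) with hPS'def
    have hS2 := S2 (fun t => sig (ζ t) (a t)) bb lamA lamB (2*m0) hσT (2*m0) 1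
      (by omega) (by omega)
    rw [← hB1, ← hAbe, (show ((-1:ℝ))^(2*m0) = 1 from by rw [pow_mul]; norm_num)] at hS2
    have hPSdiff : PS - PS' = ((lamA+lamB)/2*(1-B1)
        + (lamA-lamB)/2*(2*Abe - (-1:ℝ)^1*B1 - 1)) * (gt p n (c (2*m0) + 1) - gt p' n (c' (2*m0) + 1)) := by
      rw [hPSdef, hPS'def, ← Finset.sum_sub_distrib]
      have e : ∀ t ∈ Icc 1 (2*m0), sig (ζ t) (a t) * gt p n (c t + 1)
            - sig (ζ t) (a t) * gt p' n (c' t + 1)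
          = (sig (ζ t) (a t) * ∏ e ∈ Icc (t+1) (2*m0), bb e)
            * (gt p n (c (2*m0) + 1) - gt p' n (c' (2*m0) + 1)) := by
        intro t ht
        rw [Finset.mem_Icc] at ht
        have hd := hpd (2*m0-t) (t+1) (by omega) (by omega)
        rw [hGDa, hGD'a, hGDt t, hGD't t] at hd
        rw [show sig (ζ t) (a t) * gt p n (c t + 1) - sig (ζ t) (a t) * gt p' n (c' t + 1)
          = sig (ζ t) (a t) * (gt p n (c t + 1) - gt p' n (c' t + 1)) from by ring, hd]
        ring
      rw [Finset.sum_congr rfl e, ← Finset.sum_mul, hS2]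
    -- chain
    have hch := rec_unfold GD σb bb (2*m0) hrecD (2*m0) le_rfl
    have hS1c := S1 (fun t => sig (ζ t) (a t)) bb lamA lamB (2*m0) hσT
    rw [← hB1, ← hApi, (show ((-1:ℝ))^(2*m0) = 1 from by rw [pow_mul]; norm_num), one_mul] at hS1c
    have hchain : gt p n 1 = (1-P)*((lamA+lamB)/2*(1-B1) + (lamA-lamB)/2*(1 + 2*Api - B1))
        + B1*(gt p n (c (2*m0) + 1)) := by
      rw [hGD1, hGDa, ← hB1] at hch
      have efac : ∑ t ∈ Icc 1 (2*m0), (∏ e ∈ Icc 1 (t-1), bb e) * σb t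
          = (1-P) * ∑ t ∈ Icc 1 (2*m0), (∏ e ∈ Icc 1 (t-1), bb e) * sig (ζ t) (a t) := by
        rw [Finset.mul_sum]
        apply Finset.sum_congr rfl
        intro t _
        rw [hσbdef]
        show (∏ e ∈ Icc 1 (t-1), bb e) * ((1-P) * sig (ζ t) (a t)) = _
        ring
      rw [efac, hS1c] at hch
      exact hch
    -- word sums
    set Tsum := ∑ t ∈ Icc 1 (2*m0), (1-P) * tau (ζ t) (a t) with hTsdef
    have hSGD : ∑ j ∈ Icc 1 n, gt p n j
        = Tsum + (1-P)*(tau (-qA) R1 + tau (-qB) S1k + tau (-qA) R2 + tau (-qB) S2k)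
          + PS + sig (-qA) R1 * gt p n (c (2*m0+1) + 1)
          + sig (-qB) S1k * gt p n (c (2*m0+2) + 1)
          + sig (-qA) R2 * gt p n (c (2*m0+3) + 1)
          + sig (-qB) S2k * gt p n 1 := by
      rw [word_sum p n P a ζ c hn hper hfull1 hc0 hcs (2*m0+4) hcT hzw,
        show 2*m0+4 = (2*m0+3)+1 from by omega, Finset.sum_Icc_succ_top (by omega),
        show 2*m0+3 = (2*m0+2)+1 from by omega, Finset.sum_Icc_succ_top (by omega),
        show 2*m0+2 = (2*m0+1)+1 from by omega, Finset.sum_Icc_succ_top (by omega),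
        show 2*m0+1 = (2*m0)+1 from by omega, Finset.sum_Icc_succ_top (by omega)]
      rw [show (2*m0)+1 = 2*m0+1 from by omega, show 2*m0+1+1 = 2*m0+2 from by omega,
        show 2*m0+2+1 = 2*m0+3 from by omega, show 2*m0+3+1 = 2*m0+4 from by omega]
      rw [hζo (2*m0+1) (by omega), hζe (2*m0+2) (by omega), hζo (2*m0+3) (by omega),
        hζe (2*m0+4) (by omega), hav1, hav2, hav3, hav4, hGn]
      rw [Finset.sum_add_distrib, ← hPSdef, ← hTsdef]
      ring
    have hSGD' : ∑ j ∈ Icc 1 n, gt p' n j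
        = Tsum + (1-P)*(tau (-qA) (R1+R2) + tau (-qB) (S1k+S2k))
          + PS' + sig (-qA) (R1+R2) * gt p' n (c' (2*m0+1) + 1)
          + sig (-qB) (S1k+S2k) * gt p' n 1 := by
      rw [word_sum p' n P a' ζ c' hn hper' hfull1' hc'0 hc's (2*m0+2) hcT' hzw',
        show 2*m0+2 = (2*m0+1)+1 from by omega, Finset.sum_Icc_succ_top (by omega),
        show 2*m0+1 = (2*m0)+1 from by omega, Finset.sum_Icc_succ_top (by omega)]
      rw [show (2*m0)+1 = 2*m0+1 from by omega, show 2*m0+1+1 = 2*m0+2 from by omega]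
      rw [hζo (2*m0+1) (by omega), hζe (2*m0+2) (by omega), ha'₂', ha'₃', hGn']
      have epre : ∑ t ∈ Icc 1 (2*m0), ((1-P) * tau (ζ t) (a' t) + sig (ζ t) (a' t) * gt p' n (c' t + 1))
          = ∑ t ∈ Icc 1 (2*m0), ((1-P) * tau (ζ t) (a t) + sig (ζ t) (a t) * gt p' n (c' t + 1)) := by
        apply Finset.sum_congr rfl
        intro t ht
        rw [Finset.mem_Icc] at ht
        rw [ha'pre t ht.1 ht.2]
      rw [epre, Finset.sum_add_distrib, ← hPS'def, ← hTsdef]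
      ring
    -- apply assembly
    exact assembly P (1-P) lamA lamB c1 c2 c3 c4 B1 Api Abe
      (R1:ℝ) (S1k:ℝ) (R2:ℝ) (S2k:ℝ)
      (tau (-qA) R1) (tau (-qB) S1k) (tau (-qA) R2) (tau (-qB) S2k)
      (tau (-qA) (R1+R2)) (tau (-qB) (S1k+S2k))
      (sig (-qA) R1) (sig (-qB) S1k) (sig (-qA) R2) (sig (-qB) S2k)
      (sig (-qA) (R1+R2)) (sig (-qB) (S1k+S2k))
      (gt p n (c (2*m0) + 1)) (gt p n (c (2*m0+1) + 1)) (gt p n (c (2*m0+2) + 1))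
      (gt p n (c (2*m0+3) + 1))
      (gt p' n (c' (2*m0) + 1)) (gt p' n (c' (2*m0+1) + 1))
      (gt p n 1) (gt p' n 1)
      (gt p n (c (2*m0) + 1) - gt p' n (c' (2*m0) + 1))
      ((lamA+lamB)/2*(1-B1) + (lamA-lamB)/2*(1 + 2*Api - B1))
      ((lamA+lamB)/2*(1-B1) + (lamA-lamB)/2*(2*Abe - (-1:ℝ)^1*B1 - 1))
      PS PS' (∑ j ∈ Icc 1 n, gt p n j) (∑ j ∈ Icc 1 n, gt p' n j) Tsum
      rfl hPB1 hP1
      (by rw [hc1]; exact hsigA R1) (by rw [hc2]; exact hsigB S1k)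
      (by rw [hc3]; exact hsigA R2) (by rw [hc4]; exact hsigB S2k)
      (by rw [hc1, hc3, ← pow_add]; exact hsigA (R1+R2))
      (by rw [hc2, hc4, ← pow_add]; exact hsigB (S1k+S2k))
      (by rw [hc1]; exact htauA R1) (by rw [hc2]; exact htauB S1k)
      (by rw [hc3]; exact htauA R2) (by rw [hc4]; exact htauB S2k)
      (by rw [hc1, hc3, ← pow_add, htauA (R1+R2)]; push_cast; ring)
      (by rw [hc2, hc4, ← pow_add, htauB (S1k+S2k)]; push_cast; ring)
      E1 E2 E3 E4 E1' E2'
      rfl hGT1d hchain rfl rfl hPSdiff hSGD hSGD' 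
  -- SZ equality
  have hSZ : (∑ j ∈ Icc 1 n, zf p' j) = ∑ j ∈ Icc 1 n, zf p j := by
    rw [word_zsum p' n a' ζ c' hc'0 hc's (2*m0+2) hcT' hzw',
      word_zsum p n a ζ c hc0 hcs (2*m0+4) hcT hzw,
      show 2*m0+2 = (2*m0+1)+1 from by omega, Finset.sum_Icc_succ_top (by omega),
      show 2*m0+1 = (2*m0)+1 from by omega, Finset.sum_Icc_succ_top (by omega),
      show 2*m0+4 = (2*m0+3)+1 from by omega, Finset.sum_Icc_succ_top (by omega),
      show 2*m0+3 = (2*m0+2)+1 from by omega, Finset.sum_Icc_succ_top (by omega),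
      show 2*m0+2 = (2*m0+1)+1 from by omega, Finset.sum_Icc_succ_top (by omega),
      show 2*m0+1 = (2*m0)+1 from by omega, Finset.sum_Icc_succ_top (by omega)]
    have epre : ∑ t ∈ Icc 1 (2*m0), ((a' t : ℝ)) * ζ t = ∑ t ∈ Icc 1 (2*m0), ((a t : ℝ)) * ζ t := by
      apply Finset.sum_congr rfl
      intro t ht
      rw [Finset.mem_Icc] at ht
      rw [ha'pre t ht.1 ht.2]
    rw [epre]
    rw [show (2*m0)+1 = 2*m0+1 from by omega, show 2*m0+1+1 = 2*m0+2 from by omega,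
      show 2*m0+2+1 = 2*m0+3 from by omega, show 2*m0+3+1 = 2*m0+4 from by omega]
    rw [ha'₂', ha'₃', hav1, hav2, hav3, hav4,
      hζo (2*m0+1) (by omega), hζe (2*m0+2) (by omega),
      hζo (2*m0+3) (by omega), hζe (2*m0+4) (by omega)]
    push_cast
    ring
  -- Sval closed form
  have hn0 : ((n:ℕ):ℝ) ≠ 0 := by
    have : (0:ℝ) < (n:ℝ) := by exact_mod_cast Nat.lt_of_lt_of_le Nat.zero_lt_one hn
    exact ne_of_gt this
  have hSval : Sval qA qB r s = (lamB-lamA)^2/((n:ℝ)*(1-P)) := by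
    unfold Sval
    have e1 : (-1:ℝ)^(r+s) * qA^r * qB^s = P := by
      rw [hPdef, ← hndef]; ring
    have e2 : 1 - (qA^r*qB^s)^2 = (1-P)*(1+P) := by
      rw [hQ2]; ring
    rw [e1, e2, hlamA, hlamB]
    have hcast : (((r:ℕ) + s : ℕ):ℝ) = (n:ℝ) := by rw [hndef]
    rw [hcast]
    field_simp
    ring
  -- b-values
  have hbc2 : b (2*(m0+2)-2) = c2 := by
    have hbj := (hb (m0+1) (by omega) (by omega)).2
    rw [show 2*(m0+2)-2 = 2*(m0+1) from by omega, hbj,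
      show 2*(m0+1) = 2*m0+2 from by omega, hav2, hc2]
    ring
  have hbc3 : b (2*(m0+2)-1) = c3 := by
    have hbj := (hb (m0+2) (by omega) (by omega)).1
    rw [hbj, show 2*(m0+2)-1 = 2*m0+3 from by omega, hav3, hc3]
    ring
  -- target sum reduction
  have hbv : ∀ i, 1 ≤ i → i ≤ 2*m0+1 → b i = bb i := by
    intro i hi1 hi2
    rcases Nat.even_or_odd i with he | ho
    · have hm : i % 2 = 0 := Nat.even_iff.mp he
      rw [show i = 2*(i/2) from by omega, (hb (i/2) (by omega) (by omega)).2, hbbdef]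
      show _ = (ζ (2*(i/2)))^(a (2*(i/2)))
      rw [hζe (2*(i/2)) (by omega)]
      ring
    · have hm : i % 2 = 1 := Nat.odd_iff.mp ho
      rw [show i = 2*((i+1)/2)-1 from by omega, (hb ((i+1)/2) (by omega) (by omega)).1, hbbdef]
      show _ = (ζ (2*((i+1)/2)-1))^(a (2*((i+1)/2)-1))
      rw [hζo (2*((i+1)/2)-1) (by omega)]
      ring
  have hb0 : b 0 = c4 := by
    have h := (hbper 0).symm
    rw [zero_add] at h
    rw [h, (hb (m0+2) (by omega) (by omega)).2,
      show 2*(m0+2) = 2*m0+4 from by omega, hav4, hc4]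
    ring
  have hb2m1 : b (2*m0+1) = c1 := by
    rw [hbv (2*m0+1) (by omega) (by omega), hbbv1]
  have hTsum : ∑ j ∈ Finset.range (2*(m0+2)-2), (-1:ℝ)^j *
        ((∏ i ∈ Finset.range j, b i) + ∏ i ∈ Finset.Icc j (2*(m0+2)-3), b i)
      = 1 - c4 - c1 - c4*Api + c1*Abe + c1*c4*B1 := by
    rw [show 2*(m0+2)-2 = 2*m0+2 from by omega, show 2*(m0+2)-3 = 2*m0+1 from by omega]
    have hsplit : ∀ j ∈ Finset.range (2*m0+2), (-1:ℝ)^j *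
          ((∏ i ∈ Finset.range j, b i) + ∏ i ∈ Finset.Icc j (2*m0+1), b i)
        = (-1:ℝ)^j * (∏ i ∈ Finset.range j, b i)
          + (-1:ℝ)^j * ∏ i ∈ Finset.Icc j (2*m0+1), b i := fun j _ => by ring
    rw [Finset.sum_congr rfl hsplit, Finset.sum_add_distrib]
    -- part 1
    have hpart1 : ∑ j ∈ Finset.range (2*m0+2), (-1:ℝ)^j * (∏ i ∈ Finset.range j, b i)
        = 1 - c4*(1+Api) := by
      rw [show 2*m0+2 = (2*m0+1)+1 from by omega, Finset.sum_range_succ']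
      have e1 : ∀ j ∈ Finset.range (2*m0+1), (-1:ℝ)^(j+1) * (∏ i ∈ Finset.range (j+1), b i)
          = -((-1:ℝ)^j * (c4 * ∏ i ∈ Finset.Icc 1 j, bb i)) := by
        intro j hj
        rw [Finset.mem_range] at hj
        have e2 : ∏ i ∈ Finset.range (j+1), b i = b 0 * ∏ i ∈ Finset.Icc 1 j, b i := by
          rw [Finset.prod_range_succ']
          have e3 : ∏ i ∈ Finset.Icc 1 j, b i = ∏ i ∈ Finset.range j, b (i+1) := by
            rw [show Finset.Icc 1 j = Finset.Ico 1 (j+1) from by rw [Finset.Ico_add_one_right_eq_Icc],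
              Finset.prod_Ico_eq_prod_range]
            exact Finset.prod_congr rfl fun i _ => by rw [add_comm]
          rw [e3]
          ring
        have e4 : ∏ i ∈ Finset.Icc 1 j, b i = ∏ i ∈ Finset.Icc 1 j, bb i := by
          apply Finset.prod_congr rfl
          intro i hi
          rw [Finset.mem_Icc] at hi
          exact hbv i hi.1 (by omega)
        rw [e2, e4, hb0, pow_succ]
        ring
      rw [Finset.sum_congr rfl e1]
      simp only [pow_zero, Finset.range_zero, Finset.prod_empty, one_mul]
      rw [Finset.sum_neg_distrib]
      have e5 : ∑ j ∈ Finset.range (2*m0+1), (-1:ℝ)^j * (c4 * ∏ i ∈ Finset.Icc 1 j, bb i)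
          = c4 * (1 + Api) := by
        rw [show 2*m0+1 = (2*m0)+1 from by omega, Finset.sum_range_succ']
        have e6 : ∑ j ∈ Finset.range (2*m0), (-1:ℝ)^(j+1) * (c4 * ∏ i ∈ Finset.Icc 1 (j+1), bb i)
            = c4 * Api := by
          rw [hApi]
          have e7 : ∑ t ∈ Icc 1 (2*m0), (-1:ℝ)^t * ∏ e ∈ Icc 1 t, bb e
              = ∑ j ∈ Finset.range (2*m0), (-1:ℝ)^(1+j) * ∏ e ∈ Icc 1 (1+j), bb e := by
            rw [show Finset.Icc 1 (2*m0) = Finset.Ico 1 (2*m0+1) from by rw [Finset.Ico_add_one_right_eq_Icc],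
              Finset.sum_Ico_eq_sum_range]
            apply Finset.sum_congr (by congr 1 <;> omega) fun i _ => rfl
          rw [e7, Finset.mul_sum]
          apply Finset.sum_congr rfl
          intro j _
          rw [show 1+j = j+1 from by omega]
          ring
        rw [e6]
        simp
        ring
      rw [e5]
      ring
    -- part 2
    have hpart2 : ∑ j ∈ Finset.range (2*m0+2), (-1:ℝ)^j * (∏ i ∈ Finset.Icc j (2*m0+1), b i)
        = c1*c4*B1 + c1*Abe - c1 := by
      rw [show 2*m0+2 = (2*m0+1)+1 from by omega, Finset.sum_range_succ']
      have e0 : (-1:ℝ)^0 * (∏ i ∈ Finset.Icc 0 (2*m0+1), b i) = c1*c4*B1 := by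
        rw [pow_zero, one_mul, Icc_split_bot 0 (2*m0+1) (by omega),
          Finset.prod_Icc_succ_top (show 0+1 ≤ 2*m0+1 from by omega), hb0, hb2m1]
        have e4 : ∏ i ∈ Finset.Icc (0+1) (2*m0), b i = B1 := by
          rw [hB1]
          apply Finset.prod_congr (by congr 1) fun i hi => by
            rw [Finset.mem_Icc] at hi
            exact hbv i (by omega) (by omega)
        rw [e4]
        ring
      have e1 : ∑ j ∈ Finset.range (2*m0+1), (-1:ℝ)^(j+1) * (∏ i ∈ Finset.Icc (j+1) (2*m0+1), b i)
          = ∑ u ∈ Finset.Icc 1 (2*m0+1), (-1:ℝ)^u * ∏ i ∈ Finset.Icc u (2*m0+1), b i := by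
        rw [show Finset.Icc 1 (2*m0+1) = Finset.Ico 1 (2*m0+2) from by exact (Finset.Ico_add_one_right_eq_Icc 1 (2*m0+1)).symm,
          Finset.sum_Ico_eq_sum_range]
        apply Finset.sum_congr (by congr 1 <;> omega)
        intro i _
        rw [show 1+i = i+1 from by omega]
      rw [e1, Finset.sum_Icc_succ_top (show 1 ≤ 2*m0+1 from by omega)]
      have e2 : (-1:ℝ)^(2*m0+1) * ∏ i ∈ Finset.Icc (2*m0+1) (2*m0+1), b i = -c1 := by
        rw [Finset.Icc_self, Finset.prod_singleton, hb2m1,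
          (show Odd (2*m0+1) from ⟨m0, by ring⟩).neg_one_pow]
        ring
      have e3 : ∑ u ∈ Finset.Icc 1 (2*m0), (-1:ℝ)^u * ∏ i ∈ Finset.Icc u (2*m0+1), b i
          = c1 * Abe := by
        have e5 : ∀ u ∈ Finset.Icc 1 (2*m0), (-1:ℝ)^u * ∏ i ∈ Finset.Icc u (2*m0+1), b i
            = ((-1:ℝ)^u * ∏ i ∈ Finset.Icc u (2*m0), bb i) * c1 := by
          intro u hu
          rw [Finset.mem_Icc] at hu
          rw [Finset.prod_Icc_succ_top (show u ≤ 2*m0+1 from by omega), hb2m1]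
          have e6 : ∏ i ∈ Finset.Icc u (2*m0), b i = ∏ i ∈ Finset.Icc u (2*m0), bb i :=
            Finset.prod_congr rfl fun i hi => by
              rw [Finset.mem_Icc] at hi
              exact hbv i (by omega) (by omega)
          rw [e6]
          ring
        rw [Finset.sum_congr rfl e5, ← Finset.sum_mul, hAbe]
        ring
      rw [e2, e3, e0]
      ring
    rw [hpart1, hpart2]
    ring
  -- assemble final
  have hred := pCirc_reduce p r s qA qB P hn hper hfull1 hQ2 hP1 hP2
  have hred' := pCirc_reduce p' r s qA qB P hn hper' hfull1' hQ2 hP1 hP2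
  have hRD : RD p r s pA pB - RD p' r s pA pB
      = 2 * (pCircD p' r s qA qB - pCircD p r s qA qB) := by
    unfold RD
    rw [← hqA, ← hqB]
    ring
  rw [hRD, hred, hred', hSZ, hbc2, hbc3, hTsum, hSval]
  have hcast : ((r:ℝ) + (s:ℝ)) = (n:ℝ) := by rw [hndef]; push_cast; ring
  rw [hcast]
  exact final_glue _ _ _ _ _ _ _ _ _ hP1 hn0 hSGdiff
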